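/- For a long positive root γ, the number of positive roots ν such that ν − γ is a positive root equals (ρ, θ∨) − (ρ, γ∨), where θ is the highest root. In particular, in the simply-laced case this number equals ht(θ) − ht(γ) = h − 1 − ht(γ), where h is the Coxeter number. -/

import Mathlib

open scoped RealInnerProductSpace

/-- Data of a crystallographic root system in a real inner product space `V`,
with simple roots indexed by a finite type `ι`. -/
structure RSD (ι V : Type*) [Fintype ι] [NormedAddCommGroup V]
    [InnerProductSpace ℝ V] where
  /-- The simple roots. -/
  sroot : ι → V
  /-- The set of roots. -/
  Δ : Set V
  finite : Δ.Finite
  zero_not_mem : (0 : V) ∉ Δ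
  sroot_mem : ∀ i, sroot i ∈ Δ
  sroot_indep : LinearIndependent ℝ sroot
  neg_mem : ∀ a ∈ Δ, -a ∈ Δ
  /-- Crystallographic condition. -/
  crys : ∀ a ∈ Δ, ∀ b ∈ Δ, ∃ n : ℤ, 2 * ⟪a, b⟫ / ⟪a, a⟫ = (n : ℝ)
  /-- The reflection associated with a vector (only specified on roots). -/
  reflect : V → (V ≃ₗ[ℝ] V)
  reflect_apply : ∀ a ∈ Δ, ∀ v : V,
    reflect a v = v - (2 * ⟪a, v⟫ / ⟪a, a⟫) • a
  reflect_root_mem : ∀ a ∈ Δ, ∀ b ∈ Δ, reflect a b ∈ Δ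
  /-- Every root is a nonnegative or nonpositive integral combination of simple roots. -/
  decomp : ∀ a ∈ Δ, (∃ c : ι → ℕ, a = ∑ i, (c i : ℝ) • sroot i) ∨
      (∃ c : ι → ℕ, a = -∑ i, (c i : ℝ) • sroot i)
  /-- Irreducibility. -/
  irred : ∀ S T : Set V, S ∪ T = Δ → (∀ a ∈ S, ∀ b ∈ T, ⟪a, b⟫ = 0) →
      S = ∅ ∨ T = ∅

namespace RSD

variable {ι V : Type*} [Fintype ι] [NormedAddCommGroup V] [InnerProductSpace ℝ V]
  (R : RSD ι V)

/-- The set of positive roots. -/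
def pos : Set V := {a ∈ R.Δ | ∃ c : ι → ℕ, a = ∑ i, (c i : ℝ) • R.sroot i}

/-- `R.le μ γ` means `μ ≼ γ`, i.e. `γ - μ` is a nonnegative integral combination
of simple roots. -/
def le (μ γ : V) : Prop := ∃ c : ι → ℕ, γ - μ = ∑ i, (c i : ℝ) • R.sroot i

/-- The Weyl group, generated by the simple reflections. -/
def W : Subgroup (V ≃ₗ[ℝ] V) :=
  Subgroup.closure (Set.range fun i => R.reflect (R.sroot i))

/-- The inversion set `N(w) = {γ ∈ Δ⁺ ∣ w γ ∈ -Δ⁺}`. -/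
def N (w : V ≃ₗ[ℝ] V) : Set V := {γ ∈ R.pos | -(w γ) ∈ R.pos}

/-- The length of `w`: minimal length of an expression of `w` as a product of
simple reflections. -/
noncomputable def len (w : V ≃ₗ[ℝ] V) : ℕ :=
  sInf {n | ∃ l : List ι, l.length = n ∧
    (l.map fun i => R.reflect (R.sroot i)).prod = w}

/-- The coroot `a∨ = 2a/(a,a)`. -/
@[nolint unusedArguments]
noncomputable def coroot (_R : RSD ι V) (a : V) : V := (2 / ⟪a, a⟫) • a

/-- `ρ`, the half-sum of the positive roots. -/
noncomputable def rho : V :=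
  (2⁻¹ : ℝ) • ∑ a ∈ (R.finite.subset (fun a ha => ha.1 : R.pos ⊆ R.Δ)).toFinset, a

/-- `R.HtIs γ n` : the height of `γ` is `n`. -/
def HtIs (γ : V) (n : ℕ) : Prop :=
  ∃ c : ι → ℕ, γ = ∑ i, (c i : ℝ) • R.sroot i ∧ ∑ i, c i = n

/-- A long root: a root of maximal squared length. -/
def IsLong (γ : V) : Prop := γ ∈ R.Δ ∧ ∀ b ∈ R.Δ, ⟪b, b⟫ ≤ ⟪γ, γ⟫

/-- The highest root. -/
def IsHighest (θ : V) : Prop := θ ∈ R.pos ∧ ∀ γ ∈ R.pos, R.le γ θ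

/-- Simply-laced: all roots have the same length. -/
def SimplyLaced : Prop := ∀ a ∈ R.Δ, ∀ b ∈ R.Δ, ⟪a, a⟫ = ⟪b, b⟫

/-- A minimal inversion complete set. -/
def IsMICS (F : Set (V ≃ₗ[ℝ] V)) : Prop :=
  (∀ w ∈ F, w ∈ R.W) ∧ (⋃ w ∈ F, R.N w) = R.pos ∧
    ∀ F' ⊂ F, (⋃ w ∈ F', R.N w) ≠ R.pos

end RSD


namespace RSD

variable {ι V : Type*} [Fintype ι] [NormedAddCommGroup V] [InnerProductSpace ℝ V]
  (R : RSD ι V)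

lemma root_ne_zero {a : V} (ha : a ∈ R.Δ) : a ≠ 0 :=
  fun h => R.zero_not_mem (h ▸ ha)

lemma inner_self_pos' {a : V} (ha : a ∈ R.Δ) : (0:ℝ) < ⟪a, a⟫ :=
  real_inner_self_nonneg.lt_of_ne
    (Ne.symm fun h => R.root_ne_zero ha (inner_self_eq_zero.mp h))

lemma coeff_unique {c d : ι → ℝ}
    (h : ∑ i, c i • R.sroot i = ∑ i, d i • R.sroot i) : c = d := by
  have h0 : ∑ i, (c i - d i) • R.sroot i = 0 := by
    simp [sub_smul, Finset.sum_sub_distrib, h]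
  funext i
  have := Fintype.linearIndependent_iff.mp R.sroot_indep _ h0 i
  linarith [this]

lemma pos_mem_Δ {a : V} (ha : a ∈ R.pos) : a ∈ R.Δ := ha.1

lemma pos_rep {a : V} (ha : a ∈ R.pos) : ∃ c : ι → ℕ, a = ∑ i, (c i : ℝ) • R.sroot i := ha.2

lemma neg_not_pos {a : V} (ha : a ∈ R.pos) : -a ∉ R.pos := by
  rintro ⟨hb, d, hd⟩
  obtain ⟨c, hc⟩ := ha.2
  have h : ∑ i, ((c i : ℝ) + (d i : ℝ)) • R.sroot i = ∑ i, (0:ℝ) • R.sroot i := by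
    simp [add_smul, Finset.sum_add_distrib, ← hc, ← hd]
  have h2 := R.coeff_unique h
  have hc0 : ∀ i, (c i : ℝ) = 0 := by
    intro i
    have h3 := congrFun h2 i
    have p1 : (0:ℝ) ≤ (c i : ℝ) := Nat.cast_nonneg _
    have p2 : (0:ℝ) ≤ (d i : ℝ) := Nat.cast_nonneg _
    linarith
  exact R.root_ne_zero ha.1 (by rw [hc]; simp [hc0])

lemma sroot_pos (i : ι) : R.sroot i ∈ R.pos := by
  classical
  refine ⟨R.sroot_mem i, fun j => if j = i then 1 else 0, ?_⟩
  rw [Finset.sum_eq_single i] <;> simp (config := {contextual := true})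

lemma reflect_eq {a : V} (ha : a ∈ R.Δ) (v : V) :
    R.reflect a v = v - (2 * ⟪a, v⟫ / ⟪a, a⟫) • a := R.reflect_apply a ha v

lemma reflect_inner {a : V} (ha : a ∈ R.Δ) (v w : V) :
    ⟪R.reflect a v, R.reflect a w⟫ = ⟪v, w⟫ := by
  have hs := (R.inner_self_pos' ha).ne'
  rw [R.reflect_eq ha, R.reflect_eq ha]
  simp only [inner_sub_left, inner_sub_right, real_inner_smul_left, real_inner_smul_right]
  rw [real_inner_comm v a, real_inner_comm w a]
  field_simp
  ring

lemma reflect_reflect {a : V} (ha : a ∈ R.Δ) (v : V) :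
    R.reflect a (R.reflect a v) = v := by
  have hs := (R.inner_self_pos' ha).ne'
  rw [R.reflect_eq ha, R.reflect_eq ha]
  rw [inner_sub_right, real_inner_smul_right]
  have : ⟪a, a⟫ ≠ 0 := hs
  field_simp
  module

lemma reflect_adj {a : V} (ha : a ∈ R.Δ) (v w : V) :
    ⟪R.reflect a v, w⟫ = ⟪v, R.reflect a w⟫ := by
  conv_lhs => rw [← R.reflect_reflect ha w]
  rw [R.reflect_inner ha]

lemma reflect_smul_self {a : V} (ha : a ∈ R.Δ) (c : ℝ) :
    R.reflect a (c • a) = -(c • a) := by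
  have hs := (R.inner_self_pos' ha).ne'
  rw [map_smul, R.reflect_eq ha]
  rw [show (2 * ⟪a, a⟫ / ⟪a, a⟫ : ℝ) = 2 by field_simp]
  module

lemma inner_coroot_int {a b : V} (ha : a ∈ R.Δ) (hb : b ∈ R.Δ) :
    ∃ n : ℤ, ⟪b, R.coroot a⟫ = (n : ℝ) := by
  obtain ⟨n, hn⟩ := R.crys a ha b hb
  refine ⟨n, ?_⟩
  rw [coroot, real_inner_smul_right, real_inner_comm a b, ← hn]
  ring

lemma inner_coroot_self {a : V} (ha : a ∈ R.Δ) : ⟪a, R.coroot a⟫ = 2 := by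
  have hs := (R.inner_self_pos' ha).ne'
  rw [coroot, real_inner_smul_right]; field_simp

lemma reflect_eq_coroot {a : V} (ha : a ∈ R.Δ) (v : V) :
    R.reflect a v = v - ⟪v, R.coroot a⟫ • a := by
  rw [R.reflect_eq ha, coroot, real_inner_smul_right, real_inner_comm]
  ring_nf

/-- The finset of positive roots. -/
noncomputable def posF : Finset V :=
  (R.finite.subset (fun a ha => ha.1 : R.pos ⊆ R.Δ)).toFinset

@[simp] lemma mem_posF {a : V} : a ∈ R.posF ↔ a ∈ R.pos := Set.Finite.mem_toFinset _

lemma rho_eq : R.rho = (2⁻¹ : ℝ) • ∑ a ∈ R.posF, a := rfl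

lemma long_pairing {γ b : V} (hγ : R.IsLong γ) (hb : b ∈ R.Δ)
    (hne1 : b ≠ γ) (hne2 : b ≠ -γ) : |⟪b, R.coroot γ⟫| ≤ 1 := by
  obtain ⟨hγΔ, hmax⟩ := hγ
  have hs : (0:ℝ) < ⟪γ, γ⟫ := R.inner_self_pos' hγΔ
  have ht : (0:ℝ) < ⟪b, b⟫ := R.inner_self_pos' hb
  have hts : ⟪b, b⟫ ≤ ⟪γ, γ⟫ := hmax b hb
  obtain ⟨n, hn⟩ := R.inner_coroot_int hγΔ hb
  have hx : ⟪b, R.coroot γ⟫ = 2 * ⟪γ, b⟫ / ⟪γ, γ⟫ := by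
    rw [coroot, real_inner_smul_right, real_inner_comm b γ]; ring
  have hcs : ⟪γ, b⟫ * ⟪γ, b⟫ ≤ ⟪γ, γ⟫ * ⟪b, b⟫ := real_inner_mul_inner_self_le γ b
  by_contra hgt
  push_neg at hgt
  have h1 : 1 < |(n:ℝ)| := by rw [← hn]; exact hgt
  have h1' : 1 < |n| := by exact_mod_cast h1
  have h2 : (2:ℝ) ≤ |(n:ℝ)| := by
    rw [← Int.cast_abs]
    exact_mod_cast h1'
  have h3 : (2:ℝ) ≤ |2 * ⟪γ, b⟫ / ⟪γ, γ⟫| := by rw [← hn, hx] at h2; exact h2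
  have h4 : ⟪γ, γ⟫ ≤ |⟪γ, b⟫| := by
    rw [abs_div, abs_of_pos hs, abs_mul, le_div_iff₀ hs] at h3
    norm_num at h3
    linarith [real_inner_self_eq_norm_sq γ]
  have hpp : ⟪γ, γ⟫ * ⟪γ, γ⟫ ≤ ⟪γ, b⟫ * ⟪γ, b⟫ := by
    nlinarith [sq_abs ⟪γ, b⟫, abs_nonneg ⟪γ, b⟫]
  have h5 : ⟪γ, b⟫ * ⟪γ, b⟫ = ⟪γ, γ⟫ * ⟪γ, γ⟫ := by nlinarith
  have h6 : ⟪b, b⟫ = ⟪γ, γ⟫ := by nlinarith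
  have h7 : (⟪γ, b⟫ - ⟪γ, γ⟫) * (⟪γ, b⟫ + ⟪γ, γ⟫) = 0 := by nlinarith
  rcases mul_eq_zero.mp h7 with h8 | h8
  · apply hne1
    have h9 : ⟪b - γ, b - γ⟫ = 0 := by
      rw [real_inner_sub_sub_self, real_inner_comm γ b]
      linarith
    exact sub_eq_zero.mp (inner_self_eq_zero.mp h9)
  · apply hne2
    have h9 : ⟪b + γ, b + γ⟫ = 0 := by
      rw [real_inner_add_add_self, real_inner_comm γ b]
      linarith
    have := inner_self_eq_zero.mp h9
    linear_combination (norm := module) this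

lemma pos_add_mem {a b : V} (ha : a ∈ R.pos) (hb : b ∈ R.pos) (hab : a + b ∈ R.Δ) :
    a + b ∈ R.pos := by
  obtain ⟨c, hc⟩ := ha.2; obtain ⟨d, hd⟩ := hb.2
  refine ⟨hab, fun i => c i + d i, ?_⟩
  rw [hc, hd, ← Finset.sum_add_distrib]
  push_cast
  simp [add_smul]

lemma highest_dominant {θ : V} (hθ : R.IsHighest θ) {μ : V} (hμ : μ ∈ R.pos) :
    0 ≤ ⟪θ, μ⟫ := by
  by_contra hlt
  push_neg at hlt
  have hμΔ := hμ.1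
  have hθΔ := R.pos_mem_Δ hθ.1
  obtain ⟨n, hn⟩ := R.crys μ hμΔ θ hθΔ
  have hμμ := R.inner_self_pos' hμΔ
  have hμθ : ⟪μ, θ⟫ < 0 := by rw [real_inner_comm]; exact hlt
  have hnneg : (n:ℝ) < 0 := by
    rw [← hn]
    apply div_neg_of_neg_of_pos _ hμμ
    linarith
  have hn1 : n < 0 := by exact_mod_cast hnneg
  set m : ℕ := (-n).toNat with hmdef
  have hm : ((m:ℝ)) = -(n:ℝ) := by
    have : ((-n).toNat : ℤ) = -n := Int.toNat_of_nonneg (by omega)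
    rw [hmdef]
    exact_mod_cast congrArg (fun z : ℤ => (z:ℝ)) this
  have hm1 : 1 ≤ m := by omega
  have hν : R.reflect μ θ = θ + (m:ℝ) • μ := by
    rw [R.reflect_eq hμΔ, hn, hm]
    module
  have hνΔ : θ + (m:ℝ) • μ ∈ R.Δ := hν ▸ R.reflect_root_mem μ hμΔ θ hθΔ
  obtain ⟨c, hc⟩ := hθ.1.2
  obtain ⟨d, hd⟩ := hμ.2
  have hνpos : θ + (m:ℝ) • μ ∈ R.pos := by
    refine ⟨hνΔ, fun i => c i + m * d i, ?_⟩
    rw [hc, hd, Finset.smul_sum]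
    rw [← Finset.sum_add_distrib]
    push_cast
    congr 1
    funext i
    rw [smul_smul]
    rw [add_smul]
  obtain ⟨e, he⟩ := hθ.2 _ hνpos
  have he2 : ∑ i, ((e i : ℝ) + m * d i) • R.sroot i = ∑ i, (0:ℝ) • R.sroot i := by
    have : (∑ i, (e i : ℝ) • R.sroot i) + (m:ℝ) • μ = 0 := by
      rw [← he]; abel
    rw [hd, Finset.smul_sum] at this
    have hgoal : ∑ i, ((e i : ℝ) + (m:ℝ) * (d i : ℝ)) • R.sroot i = 0 := by
      rw [← this, ← Finset.sum_add_distrib]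
      congr 1
      funext i
      rw [add_smul, smul_smul]
    rw [hgoal]
    simp
  have h3 := R.coeff_unique he2
  have hd0 : ∀ i, (d i : ℝ) = 0 := by
    intro i
    have h4 := congrFun h3 i
    have p1 : (0:ℝ) ≤ (e i : ℝ) := Nat.cast_nonneg _
    have p2 : (0:ℝ) ≤ (d i : ℝ) := Nat.cast_nonneg _
    have p3 : (1:ℝ) ≤ (m : ℝ) := by exact_mod_cast hm1
    nlinarith
  exact R.root_ne_zero hμΔ (by rw [hd]; simp [hd0])

lemma dominant_eq_highest {θ γ : V} (hθ : R.IsHighest θ) (hγl : R.IsLong γ)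
    (hγ : γ ∈ R.pos) (hdom : ∀ i, 0 ≤ ⟪γ, R.sroot i⟫) : γ = θ := by
  obtain ⟨e, he⟩ := hθ.2 γ hγ
  have h1 : 0 ≤ ⟪γ, θ - γ⟫ := by
    rw [he, inner_sum]
    apply Finset.sum_nonneg
    intro i _
    rw [real_inner_smul_right]
    exact mul_nonneg (Nat.cast_nonneg _) (hdom i)
  have h2 : 0 ≤ ⟪θ, θ - γ⟫ := by
    rw [he, inner_sum]
    apply Finset.sum_nonneg
    intro i _
    rw [real_inner_smul_right]
    exact mul_nonneg (Nat.cast_nonneg _) (R.highest_dominant hθ (R.sroot_pos i))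
  have h3 : ⟪θ, θ⟫ ≤ ⟪γ, γ⟫ := hγl.2 θ (R.pos_mem_Δ hθ.1)
  rw [inner_sub_right] at h1 h2
  rw [real_inner_comm γ θ] at h2
  have h9 : ⟪γ - θ, γ - θ⟫ = 0 := by
    rw [real_inner_sub_sub_self]
    linarith
  exact sub_eq_zero.mp (inner_self_eq_zero.mp h9)

open scoped Classical in
/-- The set of positive roots pairing to `-1` with `coroot γ`. -/
noncomputable def BF (γ : V) : Finset V :=
  R.posF.filter (fun μ => ⟪μ, R.coroot γ⟫ = -1)

lemma phi_card {γ : V} (hγl : R.IsLong γ) (hγ : γ ∈ R.pos) :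
    {ν ∈ R.pos | ν - γ ∈ R.pos}.ncard = (R.BF γ).card := by
  classical
  have hγΔ := R.pos_mem_Δ hγ
  have hset : (fun ν => ν - γ) '' {ν ∈ R.pos | ν - γ ∈ R.pos} = ↑(R.BF γ) := by
    ext x
    simp only [Set.mem_image, Set.mem_setOf_eq, BF, Finset.coe_filter, mem_posF]
    constructor
    · rintro ⟨ν, ⟨hν, hνγ⟩, rfl⟩
      refine ⟨hνγ, ?_⟩
      have hν1 : ν ≠ γ := fun h => R.root_ne_zero (R.pos_mem_Δ hνγ) (by rw [h]; simp)
      have hν2 : ν ≠ -γ := fun h => R.neg_not_pos hγ (h ▸ hν)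
      have ha : |⟪ν, R.coroot γ⟫| ≤ 1 := R.long_pairing hγl (R.pos_mem_Δ hν) hν1 hν2
      have hexp : ⟪ν - γ, R.coroot γ⟫ = ⟪ν, R.coroot γ⟫ - 2 := by
        rw [inner_sub_left, R.inner_coroot_self hγΔ]
      by_cases hm : ν - γ = γ
      · exfalso
        rw [hm, R.inner_coroot_self hγΔ] at hexp
        have := abs_le.mp ha
        linarith
      · have hm2 : ν - γ ≠ -γ := fun h => R.neg_not_pos hγ (h ▸ hνγ)
        have hb : |⟪ν - γ, R.coroot γ⟫| ≤ 1 :=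
          R.long_pairing hγl (R.pos_mem_Δ hνγ) hm hm2
        have h1 := abs_le.mp ha
        have h2 := abs_le.mp hb
        rw [hexp] at h2 ⊢
        linarith [h1.2, h2.1, h2.2]
    · rintro ⟨hx, hx1⟩
      refine ⟨x + γ, ⟨?_, by simpa using hx⟩, by abel⟩
      have hrefl : R.reflect γ x = x + γ := by
        rw [R.reflect_eq_coroot hγΔ, hx1]
        module
      have : x + γ ∈ R.Δ := hrefl ▸ R.reflect_root_mem γ hγΔ x (R.pos_mem_Δ hx)
      exact R.pos_add_mem hx hγ this
  have hinj : Function.Injective (fun ν : V => ν - γ) := sub_left_injective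
  rw [← Set.ncard_image_of_injective _ hinj, hset, Set.ncard_coe_finset]

lemma BF_highest {θ : V} (hθ : R.IsHighest θ) : R.BF θ = ∅ := by
  classical
  rw [BF, Finset.filter_eq_empty_iff]
  intro μ hμ
  rw [mem_posF] at hμ
  have hθΔ := R.pos_mem_Δ hθ.1
  have h1 : 0 ≤ ⟪μ, R.coroot θ⟫ := by
    rw [coroot, real_inner_smul_right]
    have h2 : 0 ≤ ⟪μ, θ⟫ := by rw [real_inner_comm]; exact R.highest_dominant hθ hμ
    have h3 := R.inner_self_pos' hθΔ
    positivity
  intro h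
  rw [h] at h1
  linarith

open scoped Classical in
/-- Positive roots proportional to the `i`-th simple root. -/
noncomputable def piF (i : ι) : Finset V :=
  R.posF.filter (fun μ => ∃ c : ℝ, μ = c • R.sroot i)

open scoped Classical in
lemma reflect_piF {i : ι} {μ : V} (hμ : μ ∈ R.piF i) : R.reflect (R.sroot i) μ = -μ := by
  rw [piF, Finset.mem_filter] at hμ
  obtain ⟨c, rfl⟩ := hμ.2
  exact R.reflect_smul_self (R.sroot_mem i) c

open scoped Classical in
lemma par_pos_coeff {i : ι} {μ : V} (hμ : μ ∈ R.pos) {c : ℝ} (hc : μ = c • R.sroot i) :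
    0 < c := by
  obtain ⟨d, hd⟩ := hμ.2
  have hsum : ∑ k, (if k = i then c else 0) • R.sroot k = c • R.sroot i := by
    rw [Finset.sum_eq_single i]
    · simp
    · intro j _ hji; simp [hji]
    · simp
  have heq : (fun k => (d k : ℝ)) = fun k => if k = i then c else 0 := by
    apply R.coeff_unique
    rw [hsum, ← hd, hc]
  have hdi := congrFun heq i
  simp at hdi
  have h0 : 0 ≤ c := by rw [← hdi]; positivity
  rcases h0.lt_or_eq with h | h
  · exact h
  · exfalso
    apply R.root_ne_zero (R.pos_mem_Δ hμ)
    rw [hc, ← h, zero_smul]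

open scoped Classical in
lemma reflect_notPar {i : ι} {μ : V} (hμ : μ ∈ R.pos)
    (hpar : ¬ ∃ c : ℝ, μ = c • R.sroot i) :
    R.reflect (R.sroot i) μ ∈ R.pos
      ∧ ¬ ∃ c : ℝ, R.reflect (R.sroot i) μ = c • R.sroot i := by
  have hαΔ := R.sroot_mem i
  constructor
  · obtain ⟨c, hc⟩ := hμ.2
    have hj : ∃ j, j ≠ i ∧ c j ≠ 0 := by
      by_contra hno
      push_neg at hno
      apply hpar
      refine ⟨(c i : ℝ), ?_⟩
      rw [hc, Finset.sum_eq_single i]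
      · intro j _ hji
        rw [hno j hji]
        simp
      · simp
    obtain ⟨j, hji, hcj⟩ := hj
    obtain ⟨n, hn⟩ := R.crys (R.sroot i) hαΔ μ hμ.1
    have hrefl : R.reflect (R.sroot i) μ = μ - (n:ℝ) • R.sroot i := by
      rw [R.reflect_eq hαΔ, hn]
    have hΔ' : R.reflect (R.sroot i) μ ∈ R.Δ := R.reflect_root_mem _ hαΔ _ hμ.1
    rcases R.decomp _ hΔ' with ⟨d, hd⟩ | ⟨d, hd⟩
    · exact ⟨hΔ', d, hd⟩
    · exfalso
      have hL : ∑ k, ((c k : ℝ) - (n:ℝ) * (if k = i then (1:ℝ) else 0)) • R.sroot k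
          = μ - (n:ℝ) • R.sroot i := by
        simp only [sub_smul, Finset.sum_sub_distrib]
        rw [← hc]
        congr 1
        rw [Finset.sum_eq_single i]
        · simp [mul_smul]
        · intro k _ hki; simp [hki]
        · simp
      have hR : μ - (n:ℝ) • R.sroot i = ∑ k, (-(d k : ℝ)) • R.sroot k := by
        rw [← hrefl, hd, ← Finset.sum_neg_distrib]
        simp [neg_smul]
      have heq := R.coeff_unique (hL.trans hR)
      have hj2 := congrFun heq j
      simp only [if_neg hji, mul_zero, sub_zero] at hj2
      have p2 : (0:ℝ) ≤ (d j : ℝ) := Nat.cast_nonneg _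
      have p1 : (0:ℝ) ≤ (c j : ℝ) := Nat.cast_nonneg _
      have : (c j : ℝ) = 0 := by rw [hj2]; linarith [hj2 ▸ p1]
      exact hcj (by exact_mod_cast this)
  · rintro ⟨c, hcpar⟩
    apply hpar
    refine ⟨-c, ?_⟩
    have h2 := congrArg (R.reflect (R.sroot i)) hcpar
    rw [R.reflect_reflect hαΔ, R.reflect_smul_self hαΔ] at h2
    rw [h2, neg_smul]

open scoped Classical in
lemma reflect_rho (i : ι) :
    R.reflect (R.sroot i) R.rho = R.rho - ∑ μ ∈ R.piF i, μ := by
  have hαΔ := R.sroot_mem i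
  have key : ∑ μ ∈ R.posF, R.reflect (R.sroot i) μ
      = ((∑ μ ∈ R.posF, μ) - ∑ μ ∈ R.piF i, μ) - ∑ μ ∈ R.piF i, μ := by
    rw [← Finset.sum_filter_add_sum_filter_not R.posF
      (fun μ => ∃ c : ℝ, μ = c • R.sroot i) (fun μ => R.reflect (R.sroot i) μ)]
    rw [← Finset.sum_filter_add_sum_filter_not R.posF
      (fun μ => ∃ c : ℝ, μ = c • R.sroot i) (fun μ => μ)]
    have h1 : ∑ μ ∈ R.posF.filter (fun μ => ∃ c : ℝ, μ = c • R.sroot i),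
        R.reflect (R.sroot i) μ = -∑ μ ∈ R.piF i, μ := by
      rw [← Finset.sum_neg_distrib]
      exact Finset.sum_congr rfl (fun μ hμ => R.reflect_piF hμ)
    have h2 : ∑ μ ∈ R.posF.filter (fun μ => ¬∃ c : ℝ, μ = c • R.sroot i),
        R.reflect (R.sroot i) μ
        = ∑ μ ∈ R.posF.filter (fun μ => ¬∃ c : ℝ, μ = c • R.sroot i), μ := by
      refine Finset.sum_nbij' (fun μ => R.reflect (R.sroot i) μ)
        (fun μ => R.reflect (R.sroot i) μ) ?_ ?_ ?_ ?_ ?_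
      · intro a ha
        rw [Finset.mem_filter, mem_posF] at ha ⊢
        have := R.reflect_notPar ha.1 ha.2
        exact ⟨this.1, this.2⟩
      · intro a ha
        rw [Finset.mem_filter, mem_posF] at ha ⊢
        have := R.reflect_notPar ha.1 ha.2
        exact ⟨this.1, this.2⟩
      · intro a _; exact R.reflect_reflect hαΔ a
      · intro a _; exact R.reflect_reflect hαΔ a
      · intro a _; rfl
    rw [h1, h2]
    have : R.piF i = R.posF.filter (fun μ => ∃ c : ℝ, μ = c • R.sroot i) := rfl
    rw [← this]
    abel
  rw [rho_eq, map_smul, map_sum, key]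
  module

lemma coroot_reflect {a : V} (ha : a ∈ R.Δ) {b : V} (hb : b ∈ R.Δ) :
    R.coroot (R.reflect a b) = R.reflect a (R.coroot b) := by
  rw [coroot, coroot, R.reflect_inner ha b b, ← map_smul]

open scoped Classical in
lemma invariance {γ : V} (hγl : R.IsLong γ) (hγ : γ ∈ R.pos) (i : ι)
    (hneg : ⟪γ, R.sroot i⟫ < 0) :
    ((R.BF (R.reflect (R.sroot i) γ)).card : ℝ)
        + ⟪R.rho, R.coroot (R.reflect (R.sroot i) γ)⟫
      = ((R.BF γ).card : ℝ) + ⟪R.rho, R.coroot γ⟫ := by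
  have hαΔ : R.sroot i ∈ R.Δ := R.sroot_mem i
  have hγΔ := R.pos_mem_Δ hγ
  have hcor : ∀ μ : V, ⟪μ, R.coroot (R.reflect (R.sroot i) γ)⟫
      = ⟪R.reflect (R.sroot i) μ, R.coroot γ⟫ := by
    intro μ
    rw [R.coroot_reflect hαΔ hγΔ, ← R.reflect_adj hαΔ]
  have hrho : ⟪R.rho, R.coroot (R.reflect (R.sroot i) γ)⟫
      = ⟪R.rho, R.coroot γ⟫ - ∑ μ ∈ R.piF i, ⟪μ, R.coroot γ⟫ := by
    rw [hcor R.rho, R.reflect_rho i, inner_sub_left, sum_inner]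
  have hval : ∀ μ ∈ R.piF i, ⟪μ, R.coroot γ⟫ = -1 ∨ ⟪μ, R.coroot γ⟫ = 0
      ∨ ⟪μ, R.coroot γ⟫ = 1 := by
    intro μ hμ
    rw [piF, Finset.mem_filter, mem_posF] at hμ
    obtain ⟨hμpos, c, hpar⟩ := hμ
    have hμΔ := R.pos_mem_Δ hμpos
    have hcpos : 0 < c := R.par_pos_coeff hμpos hpar
    have hne1 : μ ≠ γ := by
      rintro rfl
      rw [hpar, real_inner_smul_left] at hneg
      nlinarith [R.inner_self_pos' hαΔ]
    have hne2 : μ ≠ -γ := fun h => R.neg_not_pos hγ (h ▸ hμpos)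
    have habs := R.long_pairing hγl hμΔ hne1 hne2
    obtain ⟨n, hn⟩ := R.inner_coroot_int hγΔ hμΔ
    rw [hn] at habs ⊢
    have h1 : |n| ≤ 1 := by exact_mod_cast (by rw [← Int.cast_abs] at habs; exact_mod_cast habs : ((|n| : ℤ) : ℝ) ≤ 1)
    have : n = -1 ∨ n = 0 ∨ n = 1 := by
      obtain ⟨l, u⟩ := abs_le.mp h1
      omega
    rcases this with h | h | h <;> rw [h] <;> norm_num
  have hBcard : ∀ δ : V, ((R.BF δ).card : ℝ)
      = ∑ μ ∈ R.posF, (if ⟪μ, R.coroot δ⟫ = -1 then (1:ℝ) else 0) := by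
    intro δ
    rw [BF, Finset.card_filter]
    push_cast
    exact Finset.sum_congr rfl (fun μ _ => by split <;> norm_num)
  have hsplit : ∀ f : V → ℝ, ∑ μ ∈ R.posF, f μ = (∑ μ ∈ R.piF i, f μ)
      + ∑ μ ∈ R.posF.filter (fun μ => ¬∃ c : ℝ, μ = c • R.sroot i), f μ :=
    fun f => (Finset.sum_filter_add_sum_filter_not R.posF _ f).symm
  have hbij : ∑ μ ∈ R.posF.filter (fun μ => ¬∃ c : ℝ, μ = c • R.sroot i),
        (if ⟪R.reflect (R.sroot i) μ, R.coroot γ⟫ = -1 then (1:ℝ) else 0)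
      = ∑ μ ∈ R.posF.filter (fun μ => ¬∃ c : ℝ, μ = c • R.sroot i),
        (if ⟪μ, R.coroot γ⟫ = -1 then (1:ℝ) else 0) := by
    refine Finset.sum_nbij' (fun μ => R.reflect (R.sroot i) μ)
      (fun μ => R.reflect (R.sroot i) μ) ?_ ?_ ?_ ?_ ?_
    · intro a ha
      rw [Finset.mem_filter, mem_posF] at ha ⊢
      have := R.reflect_notPar ha.1 ha.2
      exact ⟨this.1, this.2⟩
    · intro a ha
      rw [Finset.mem_filter, mem_posF] at ha ⊢
      have := R.reflect_notPar ha.1 ha.2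
      exact ⟨this.1, this.2⟩
    · intro a _; exact R.reflect_reflect hαΔ a
    · intro a _; exact R.reflect_reflect hαΔ a
    · intro a _; rfl
  have hfirst : ∑ μ ∈ R.piF i,
        (if ⟪μ, R.coroot (R.reflect (R.sroot i) γ)⟫ = -1 then (1:ℝ) else 0)
      = ∑ μ ∈ R.piF i, (if ⟪μ, R.coroot γ⟫ = 1 then (1:ℝ) else 0) := by
    refine Finset.sum_congr rfl (fun μ hμ => ?_)
    rw [hcor μ, R.reflect_piF hμ, inner_neg_left]
    exact if_congr (by constructor <;> intro h <;> linarith) rfl rfl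
  have hsecond : ∑ μ ∈ R.posF.filter (fun μ => ¬∃ c : ℝ, μ = c • R.sroot i),
        (if ⟪μ, R.coroot (R.reflect (R.sroot i) γ)⟫ = -1 then (1:ℝ) else 0)
      = ∑ μ ∈ R.posF.filter (fun μ => ¬∃ c : ℝ, μ = c • R.sroot i),
        (if ⟪R.reflect (R.sroot i) μ, R.coroot γ⟫ = -1 then (1:ℝ) else 0) :=
    Finset.sum_congr rfl (fun μ _ => by rw [hcor μ])
  have hterm : ∑ μ ∈ R.piF i, ((if ⟪μ, R.coroot γ⟫ = 1 then (1:ℝ) else 0)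
      - (if ⟪μ, R.coroot γ⟫ = -1 then (1:ℝ) else 0) - ⟪μ, R.coroot γ⟫) = 0 :=
    Finset.sum_eq_zero (fun μ hμ => by
      rcases hval μ hμ with h | h | h <;> rw [h] <;> norm_num)
  rw [Finset.sum_sub_distrib, Finset.sum_sub_distrib] at hterm
  rw [hBcard, hBcard, hrho]
  rw [hsplit (fun μ => if ⟪μ, R.coroot (R.reflect (R.sroot i) γ)⟫ = -1 then (1:ℝ) else 0),
    hsplit (fun μ => if ⟪μ, R.coroot γ⟫ = -1 then (1:ℝ) else 0)]
  rw [hfirst, hsecond, hbij]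
  linarith

lemma step_pos {γ : V} (hγ : γ ∈ R.pos) {c : ι → ℕ}
    (hc : γ = ∑ k, (c k : ℝ) • R.sroot k) (i : ι) (hneg : ⟪γ, R.sroot i⟫ < 0) :
    ∃ (m : ℕ) (c' : ι → ℕ), 1 ≤ m ∧ R.reflect (R.sroot i) γ ∈ R.pos ∧
      R.reflect (R.sroot i) γ = ∑ k, (c' k : ℝ) • R.sroot k ∧
      (∑ k, c' k) = (∑ k, c k) + m := by
  classical
  have hαΔ := R.sroot_mem i
  have hγΔ := R.pos_mem_Δ hγ
  obtain ⟨n, hn⟩ := R.crys (R.sroot i) hαΔ γ hγΔ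
  have hnneg : (n:ℝ) < 0 := by
    rw [← hn]
    apply div_neg_of_neg_of_pos _ (R.inner_self_pos' hαΔ)
    rw [real_inner_comm] at hneg
    linarith
  have hn1 : n < 0 := by exact_mod_cast hnneg
  set m : ℕ := (-n).toNat with hmdef
  have hm : ((m:ℝ)) = -(n:ℝ) := by
    have h := Int.toNat_of_nonneg (by omega : (0:ℤ) ≤ -n)
    rw [hmdef]
    exact_mod_cast congrArg (fun z : ℤ => (z:ℝ)) h
  have hm1 : 1 ≤ m := by omega
  have hrefl : R.reflect (R.sroot i) γ = γ + (m:ℝ) • R.sroot i := by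
    rw [R.reflect_eq hαΔ, hn, hm]
    module
  have hrep : γ + (m:ℝ) • R.sroot i
      = ∑ k, (((c k + if k = i then m else 0 : ℕ)) : ℝ) • R.sroot k := by
    push_cast
    simp only [add_smul]
    rw [Finset.sum_add_distrib, ← hc]
    congr 1
    rw [Finset.sum_eq_single i]
    · simp
    · intro k _ hki; simp [hki]
    · simp
  refine ⟨m, fun k => c k + if k = i then m else 0, hm1, ?_, ?_, ?_⟩
  · refine ⟨R.reflect_root_mem _ hαΔ _ hγΔ, fun k => c k + if k = i then m else 0, ?_⟩
    rw [hrefl, hrep]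
  · rw [hrefl, hrep]
  · classical
    simp [Finset.sum_add_distrib, Finset.sum_ite_eq']

lemma ht_le {θ γ : V} (hθ : R.IsHighest θ) (hγ : γ ∈ R.pos) {cθ c : ι → ℕ}
    (hcθ : θ = ∑ k, (cθ k : ℝ) • R.sroot k) (hc : γ = ∑ k, (c k : ℝ) • R.sroot k) :
    (∑ k, c k) ≤ (∑ k, cθ k) ∧ ((∑ k, cθ k) ≤ (∑ k, c k) → γ = θ) := by
  obtain ⟨e, he⟩ := hθ.2 γ hγ
  have heq : (fun k => (cθ k : ℝ)) = fun k => (c k : ℝ) + (e k : ℝ) := by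
    apply R.coeff_unique
    simp only [add_smul]
    rw [Finset.sum_add_distrib, ← hc, ← he, ← hcθ]
    abel
  have hkey : ∀ k, cθ k = c k + e k := fun k => by exact_mod_cast congrFun heq k
  have hsum : (∑ k, cθ k) = (∑ k, c k) + ∑ k, e k := by
    rw [Finset.sum_congr rfl (fun k _ => hkey k), Finset.sum_add_distrib]
  constructor
  · omega
  · intro hle
    have he0 : ∀ k ∈ Finset.univ, e k = 0 := by
      have : (∑ k, e k) = 0 := by omega
      exact fun k hk => Finset.sum_eq_zero_iff.mp this k hk
    have : θ - γ = 0 := by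
      rw [he]
      apply Finset.sum_eq_zero
      intro k hk
      rw [he0 k hk]
      simp
    have := sub_eq_zero.mp this
    exact this.symm

lemma g_theta {θ : V} (hθ : R.IsHighest θ) {cθ : ι → ℕ}
    (hcθ : θ = ∑ k, (cθ k : ℝ) • R.sroot k) :
    ∀ (k : ℕ) (γ : V) (c : ι → ℕ), R.IsLong γ → γ ∈ R.pos →
      γ = ∑ j, (c j : ℝ) • R.sroot j → (∑ j, cθ j) ≤ (∑ j, c j) + k →
      ((R.BF γ).card : ℝ) + ⟪R.rho, R.coroot γ⟫
        = ((R.BF θ).card : ℝ) + ⟪R.rho, R.coroot θ⟫ := by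
  intro k
  induction k with
  | zero =>
    intro γ c hγl hγ hc hle
    obtain ⟨h1, h2⟩ := R.ht_le hθ hγ hcθ hc
    rw [h2 (by omega)]
  | succ k ih =>
    intro γ c hγl hγ hc hle
    by_cases hγθ : γ = θ
    · rw [hγθ]
    · have hex : ∃ i, ⟪γ, R.sroot i⟫ < 0 := by
        by_contra hno
        push_neg at hno
        exact hγθ (R.dominant_eq_highest hθ hγl hγ hno)
      obtain ⟨i, hi⟩ := hex
      obtain ⟨m, c', hm1, hpos', hrep', hsum'⟩ := R.step_pos hγ hc i hi
      have hlong' : R.IsLong (R.reflect (R.sroot i) γ) := by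
        refine ⟨R.reflect_root_mem _ (R.sroot_mem i) _ hγl.1, ?_⟩
        intro b hb
        rw [R.reflect_inner (R.sroot_mem i)]
        exact hγl.2 b hb
      rw [← R.invariance hγl hγ i hi]
      exact ih _ c' hlong' hpos' hrep' (by omega)

open scoped Classical in
lemma rho_coroot_sroot (hsl : R.SimplyLaced) (i : ι) :
    ⟪R.rho, R.coroot (R.sroot i)⟫ = 1 := by
  have hαΔ := R.sroot_mem i
  have hpi : R.piF i = {R.sroot i} := by
    apply Finset.ext
    intro μ
    rw [piF, Finset.mem_filter, mem_posF, Finset.mem_singleton]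
    constructor
    · rintro ⟨hμ, c, hc⟩
      have hcpos := R.par_pos_coeff hμ hc
      have h1 : ⟪μ, μ⟫ = ⟪R.sroot i, R.sroot i⟫ := hsl _ (R.pos_mem_Δ hμ) _ hαΔ
      rw [hc, real_inner_smul_left, real_inner_smul_right] at h1
      have hα2 := R.inner_self_pos' hαΔ
      have h9 : (c * c - 1) * ⟪R.sroot i, R.sroot i⟫ = 0 := by linear_combination h1
      have hcc : c * c = 1 := by
        rcases mul_eq_zero.mp h9 with h | h
        · linarith
        · exact absurd h (ne_of_gt hα2)
      have hc1 : c = 1 := by nlinarith [hcc]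
      rw [hc, hc1, one_smul]
    · rintro rfl
      exact ⟨R.sroot_pos i, 1, by simp⟩
  have h2 := R.reflect_rho i
  rw [hpi, Finset.sum_singleton, R.reflect_eq_coroot hαΔ] at h2
  have h3 := sub_right_injective h2
  have h4 : (⟪R.rho, R.coroot (R.sroot i)⟫ - 1) • R.sroot i = 0 := by
    rw [sub_smul, one_smul, h3, sub_self]
  rcases smul_eq_zero.mp h4 with h | h
  · linarith [h]
  · exact absurd h (R.root_ne_zero hαΔ)

lemma rho_coroot_eq_ht (hsl : R.SimplyLaced) {γ : V} (hγΔ : γ ∈ R.Δ) {c : ι → ℕ}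
    (hc : γ = ∑ k, (c k : ℝ) • R.sroot k) :
    ⟪R.rho, R.coroot γ⟫ = ∑ k, (c k : ℝ) := by
  have hs := R.inner_self_pos' hγΔ
  have hinner : ∀ k, ⟪R.rho, R.sroot k⟫ = ⟪γ, γ⟫ / 2 := by
    intro k
    have h1 := R.rho_coroot_sroot hsl k
    rw [coroot, real_inner_smul_right] at h1
    have h2 : ⟪R.sroot k, R.sroot k⟫ = ⟪γ, γ⟫ := hsl _ (R.sroot_mem k) _ hγΔ
    rw [h2] at h1
    have hs' : ⟪γ, γ⟫ ≠ 0 := ne_of_gt hs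
    field_simp at h1
    linarith
  have h5 : ⟪R.rho, γ⟫ = (⟪γ, γ⟫ / 2) * ∑ k, (c k : ℝ) := by
    conv_lhs => rw [hc]
    rw [inner_sum]
    rw [Finset.sum_congr rfl (fun k _ => by rw [real_inner_smul_right, hinner k])]
    rw [← Finset.sum_mul]
    ring
  rw [coroot, real_inner_smul_right, h5]
  field_simp

end RSD

/-- For a long positive root `γ`,
`#{ν ∈ Δ⁺ ∣ ν - γ ∈ Δ⁺} = (ρ,θ∨) - (ρ,γ∨)`; in the simply-laced case this equals
`ht(θ) - ht(γ)`. -/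
theorem card_Phi_eq
    {ι V : Type*} [Fintype ι] [NormedAddCommGroup V] [InnerProductSpace ℝ V]
    (R : RSD ι V) (γ θ : V) (hγl : R.IsLong γ) (hγ : γ ∈ R.pos)
    (hθ : R.IsHighest θ) :
    (({ν ∈ R.pos | ν - γ ∈ R.pos}.ncard : ℝ)
        = ⟪R.rho, R.coroot θ⟫ - ⟪R.rho, R.coroot γ⟫) ∧
      (R.SimplyLaced → ∀ nθ nγ : ℕ, R.HtIs θ nθ → R.HtIs γ nγ →
        {ν ∈ R.pos | ν - γ ∈ R.pos}.ncard = nθ - nγ) := by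
  have hθΔ := R.pos_mem_Δ hθ.1
  have hγΔ := R.pos_mem_Δ hγ
  obtain ⟨cθ, hcθ⟩ := hθ.1.2
  obtain ⟨c, hc⟩ := hγ.2
  have hg := R.g_theta hθ hcθ (∑ j, cθ j) γ c hγl hγ hc (by omega)
  have hBθ : (R.BF θ).card = 0 := by rw [R.BF_highest hθ]; rfl
  have hphi := R.phi_card hγl hγ
  have hpart1 : (({ν ∈ R.pos | ν - γ ∈ R.pos}.ncard : ℝ))
      = ⟪R.rho, R.coroot θ⟫ - ⟪R.rho, R.coroot γ⟫ := by
    rw [hphi]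
    rw [hBθ] at hg
    push_cast at hg ⊢
    linarith
  refine ⟨hpart1, ?_⟩
  intro hsl nθ nγ hhθ hhγ
  obtain ⟨cθ', hcθ', hsθ⟩ := hhθ
  obtain ⟨cγ', hcγ', hsγ⟩ := hhγ
  have h1 : ⟪R.rho, R.coroot θ⟫ = (nθ : ℝ) := by
    rw [R.rho_coroot_eq_ht hsl hθΔ hcθ', ← Nat.cast_sum, hsθ]
  have h2 : ⟪R.rho, R.coroot γ⟫ = (nγ : ℝ) := by
    rw [R.rho_coroot_eq_ht hsl hγΔ hcγ', ← Nat.cast_sum, hsγ]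
  have h3 : (({ν ∈ R.pos | ν - γ ∈ R.pos}.ncard : ℝ)) = (nθ:ℝ) - nγ := by
    rw [hpart1, h1, h2]
  have h4 : {ν ∈ R.pos | ν - γ ∈ R.pos}.ncard + nγ = nθ := by
    have : (({ν ∈ R.pos | ν - γ ∈ R.pos}.ncard + nγ : ℕ) : ℝ) = (nθ : ℝ) := by
      push_cast
      linarith
    exact_mod_cast this
  omega
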